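/- Strict monotonicity of the barycenter: Let E be an ordered Banach space, and let p and q be Radon Borel probability measures on E with ∫ ‖x‖ dp < ∞ and ∫ ‖x‖ dq < ∞. Suppose there exists a coupling of p and q supported on {(a,b) : a ≤ b}, and suppose the barycenters (Bochner integrals) coincide: ∫ x dp = ∫ x dq. Then p = q. -/

import Mathlib

open MeasureTheory Set TopologicalSpace
open scoped ENNReal NNReal

/-- A coupling of two Borel probability measures `p` and `q` on `Z` is a measure on
`Z × Z` whose marginals (pushforwards along the projections) are `p` and `q`. -/
def IsCoupling {Z : Type*} [MeasurableSpace Z] (r : Measure (Z × Z)) (p q : Measure Z) : Prop :=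
  r.map Prod.fst = p ∧ r.map Prod.snd = q

section Aux

variable {E : Type*} [NormedAddCommGroup E] [NormedSpace ℝ E] [CompleteSpace E]
    [MeasurableSpace E] [BorelSpace E]

/-- An inner regular probability measure on a normed space is concentrated on a separable
set, hence the identity is a.e. strongly measurable. -/
lemma aux_aesm_id (p : Measure E) [IsProbabilityMeasure p] (hpR : p.InnerRegular) :
    AEStronglyMeasurable (id : E → E) p := by
  have h := hpR.innerRegular
  have hK : ∀ n : ℕ, ∃ K : Set E, K ⊆ univ ∧ IsCompact K ∧
      (1 - 1/(n+1) : ℝ≥0∞) < p K := by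
    intro n
    refine h MeasurableSet.univ _ ?_
    rw [measure_univ]
    refine ENNReal.sub_lt_self ENNReal.one_ne_top one_ne_zero ?_
    simp [ENNReal.div_eq_inv_mul]
  choose K _ hKc hKp using hK
  set A := ⋃ n, K n with hA
  have hAm : MeasurableSet A := MeasurableSet.iUnion fun n => (hKc n).isClosed.measurableSet
  have hAsep : IsSeparable (closure A) :=
    isSeparable_closure.mpr (isSeparable_iUnion.mpr fun n => (hKc n).isSeparable)
  have hAc : p Aᶜ = 0 := by
    have hle : ∀ n : ℕ, p Aᶜ ≤ 1/(n+1) := by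
      intro n
      have h1 : p Aᶜ ≤ p (K n)ᶜ :=
        measure_mono (compl_subset_compl.mpr (subset_iUnion K n))
      have h2 : p (K n)ᶜ = 1 - p (K n) :=
        prob_compl_eq_one_sub (hKc n).isClosed.measurableSet
      have h3 : (1 : ℝ≥0∞) - p (K n) ≤ 1/(n+1) := by
        have hb : (1/(n+1) : ℝ≥0∞) ≤ 1 := by
          rw [one_div]
          exact ENNReal.inv_le_one.mpr le_add_self
        refine tsub_le_iff_left.mpr ?_
        calc (1:ℝ≥0∞) = 1/(n+1) + (1 - 1/(n+1)) := (add_tsub_cancel_of_le hb).symm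
          _ ≤ 1/(n+1) + p (K n) := add_le_add le_rfl (hKp n).le
          _ = p (K n) + 1/(n+1) := add_comm _ _
      calc p Aᶜ ≤ p (K n)ᶜ := h1
        _ = 1 - p (K n) := h2
        _ ≤ 1/(n+1) := h3
    by_contra h0
    obtain ⟨n, hn⟩ := ENNReal.exists_inv_nat_lt h0
    have : p Aᶜ ≤ ((n : ℝ≥0∞) + 1)⁻¹ := by simpa [one_div] using hle n
    have h2 : ((n : ℝ≥0∞) + 1)⁻¹ ≤ (n : ℝ≥0∞)⁻¹ :=
      ENNReal.inv_le_inv.mpr le_self_add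
    exact absurd (this.trans h2) (not_le.mpr hn)
  set g : E → E := (closure A).indicator id with hg
  have hsm : StronglyMeasurable g := by
    rw [stronglyMeasurable_iff_measurable_separable]
    constructor
    · exact measurable_id.indicator isClosed_closure.measurableSet
    · refine (hAsep.union (finite_singleton (0:E)).isSeparable).mono ?_
      rintro y ⟨x, rfl⟩
      by_cases hx : x ∈ closure A
      · exact Or.inl (by simpa [g, indicator_of_mem hx] using hx)
      · exact Or.inr (by simp [g, indicator_of_notMem hx])
  refine ⟨g, hsm, ?_⟩
  have : ∀ᵐ x ∂p, x ∈ A := by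
    rw [ae_iff]
    exact hAc
  filter_upwards [this] with x hx
  simp [g, indicator_of_mem (subset_closure hx)]

/-- Key lemma: if a function takes values a.e. in a closed pointed convex cone and has
zero integral, it vanishes a.e. -/
lemma aux_key {α : Type*} [MeasurableSpace α] {μ : Measure α} [IsProbabilityMeasure μ]
    (C : Set E) (hCcl : IsClosed C) (hC0 : (0 : E) ∈ C)
    (hCadd : ∀ a ∈ C, ∀ b ∈ C, a + b ∈ C)
    (hCsmul : ∀ t : ℝ, 0 ≤ t → ∀ c ∈ C, t • c ∈ C)
    (hCpointed : ∀ c ∈ C, -c ∈ C → c = 0)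
    {g : α → E} (hg : Integrable g μ) (hmem : ∀ᵐ ω ∂μ, g ω ∈ C)
    (hzero : ∫ ω, g ω ∂μ = 0) : g =ᵐ[μ] 0 := by
  have hconv : Convex ℝ C := fun x hx y hy a b ha hb _ =>
    hCadd _ (hCsmul a ha x hx) _ (hCsmul b hb y hy)
  -- separating functionals
  have hdual : ∀ x, x ∈ C → x ≠ 0 → ∃ φ : E →L[ℝ] ℝ, (∀ c ∈ C, 0 ≤ φ c) ∧ 0 < φ x := by
    intro x hx hx0
    have hnx : -x ∉ C := fun h => hx0 (hCpointed x hx h)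
    obtain ⟨f, u, hfu, hb⟩ := geometric_hahn_banach_point_closed hconv hCcl hnx
    have hu0 : u < 0 := by simpa using hb 0 hC0
    have hpos : ∀ c ∈ C, 0 ≤ f c := by
      intro c hc
      by_contra hneg
      push_neg at hneg
      have ht : (0:ℝ) ≤ u / f c := by rw [← neg_div_neg_eq]; exact div_nonneg (by linarith) (by linarith)
      have h2 := hb _ (hCsmul (u / f c) ht c hc)
      rw [f.map_smul, smul_eq_mul, div_mul_cancel₀ u (ne_of_lt hneg)] at h2
      exact lt_irrefl u h2
    refine ⟨f, hpos, ?_⟩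
    have hneg : f (-x) = - f x := map_neg f x
    rw [hneg] at hfu
    linarith
  choose! φ hφ0 hφx using hdual
  -- each separating functional vanishes a.e. along g
  have hnull : ∀ x, x ∈ C → x ≠ 0 → ∀ᵐ ω ∂μ, (φ x) (g ω) = 0 := by
    intro x hx hx0
    have hint : Integrable (fun ω => (φ x) (g ω)) μ := (φ x).integrable_comp hg
    have h1 : ∫ ω, (φ x) (g ω) ∂μ = 0 := by
      rw [ContinuousLinearMap.integral_comp_comm _ hg, hzero, map_zero]
    have h2 : 0 ≤ᵐ[μ] fun ω => (φ x) (g ω) :=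
      hmem.mono fun ω hω => hφ0 x hx hx0 _ hω
    exact (integral_eq_zero_iff_of_nonneg_ae h2 hint).mp h1
  -- separable reduction
  obtain ⟨g', hg'sm, hgg'⟩ := hg.1
  have hTsep : IsSeparable (closure (range g')) := isSeparable_closure.mpr hg'sm.isSeparable_range
  set T := closure (range g') with hT
  haveI : SecondCountableTopology ↥T := hTsep.secondCountableTopology
  set ι := {x : ↥T // (x : E) ∈ C ∧ (x : E) ≠ 0} with hι
  set U : ι → Set ↥T := fun x => {y : ↥T | 0 < (φ (x.1 : E)) (y : E)} with hU
  have hUopen : ∀ x : ι, IsOpen (U x) := fun x =>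
    isOpen_lt continuous_const ((φ (x.1 : E)).continuous.comp continuous_subtype_val)
  obtain ⟨t, htc, htU⟩ := TopologicalSpace.isOpen_iUnion_countable U hUopen
  have hcov : ∀ y : ↥T, (y:E) ∈ C → (y:E) ≠ 0 → ∃ x ∈ t, y ∈ U x := by
    intro y hy hy0
    have hmem' : y ∈ ⋃ x, U x := mem_iUnion.mpr ⟨⟨y, hy, hy0⟩, hφx _ hy hy0⟩
    rw [← htU] at hmem'
    simpa using hmem'
  have hae1 : ∀ᵐ ω ∂μ, g' ω ∈ C := (hmem.and hgg').mono fun ω ⟨h1, h2⟩ => h2 ▸ h1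
  have hae2 : ∀ᵐ ω ∂μ, ∀ x ∈ t, (φ ((x : ι).1 : E)) (g' ω) = 0 := by
    rw [ae_ball_iff htc]
    intro x _
    exact ((hnull _ x.2.1 x.2.2).and hgg').mono fun ω ⟨h1, h2⟩ => h2 ▸ h1
  refine hgg'.trans ?_
  filter_upwards [hae1, hae2] with ω h1 h2
  show g' ω = 0
  by_contra h0
  have hyT : g' ω ∈ T := subset_closure (mem_range_self ω)
  obtain ⟨x, hxt, hxU⟩ := hcov ⟨g' ω, hyT⟩ h1 h0
  have hz := h2 x hxt
  simp only [hU, mem_setOf_eq] at hxU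
  rw [hz] at hxU
  exact lt_irrefl 0 hxU

end Aux

/-- Strict monotonicity of the barycenter on an ordered Banach space (order given by a
closed, convex, pointed positive cone `C`): if `p ≤ q` in the stochastic order and the
barycenters (Bochner integrals) of `p` and `q` coincide, then `p = q`. -/
theorem barycenter_strictly_monotone
    {E : Type*} [NormedAddCommGroup E] [NormedSpace ℝ E] [CompleteSpace E]
    [MeasurableSpace E] [BorelSpace E]
    (C : Set E) (hCcl : IsClosed C) (hC0 : (0 : E) ∈ C)
    (hCadd : ∀ a ∈ C, ∀ b ∈ C, a + b ∈ C)
    (hCsmul : ∀ t : ℝ, 0 ≤ t → ∀ c ∈ C, t • c ∈ C)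
    (hCpointed : ∀ c ∈ C, -c ∈ C → c = 0)
    (p q : Measure E) [IsProbabilityMeasure p] [IsProbabilityMeasure q]
    (hpR : p.InnerRegular) (hqR : q.InnerRegular)
    (hp1 : Integrable (fun x => ‖x‖) p) (hq1 : Integrable (fun x => ‖x‖) q)
    (hcoup : ∃ r : Measure (E × E), IsCoupling r p q ∧ r {z : E × E | z.2 - z.1 ∈ C}ᶜ = 0)
    (hbar : (∫ x, x ∂p) = ∫ x, x ∂q) :
    p = q := by
  obtain ⟨r, ⟨hrfst, hrsnd⟩, hrC⟩ := hcoup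
  haveI : IsProbabilityMeasure r := by
    constructor
    have : r.map Prod.fst Set.univ = r Set.univ := by
      rw [Measure.map_apply measurable_fst MeasurableSet.univ]
      rfl
    rw [← this, hrfst, measure_univ]
  have hip : Integrable (id : E → E) p :=
    ⟨aux_aesm_id p hpR, by simpa [HasFiniteIntegral] using hp1.2⟩
  have hiq : Integrable (id : E → E) q :=
    ⟨aux_aesm_id q hqR, by simpa [HasFiniteIntegral] using hq1.2⟩
  have hif : Integrable (fun z : E × E => z.1) r := by
    have := (integrable_map_measure (g := (id : E → E))
      (by rw [hrfst]; exact hip.1) measurable_fst.aemeasurable).mp (by rw [hrfst]; exact hip)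
    exact this
  have his : Integrable (fun z : E × E => z.2) r := by
    have := (integrable_map_measure (g := (id : E → E))
      (by rw [hrsnd]; exact hiq.1) measurable_snd.aemeasurable).mp (by rw [hrsnd]; exact hiq)
    exact this
  have hfint : ∫ z, z.1 ∂r = ∫ x, x ∂p := by
    have := integral_map (μ := r) (φ := Prod.fst) (f := (id : E → E))
      measurable_fst.aemeasurable (by rw [hrfst]; exact hip.1)
    rw [hrfst] at this
    simpa using this.symm
  have hsint : ∫ z, z.2 ∂r = ∫ x, x ∂q := by
    have := integral_map (μ := r) (φ := Prod.snd) (f := (id : E → E))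
      measurable_snd.aemeasurable (by rw [hrsnd]; exact hiq.1)
    rw [hrsnd] at this
    simpa using this.symm
  have hmemae : ∀ᵐ z ∂r, z.2 - z.1 ∈ C := by
    rw [ae_iff]
    exact hrC
  have hizero : ∫ z, (z.2 - z.1) ∂r = 0 := by
    rw [integral_sub his hif, hfint, hsint, hbar, sub_self]
  have hkey : (fun z : E × E => z.2 - z.1) =ᵐ[r] 0 :=
    aux_key C hCcl hC0 hCadd hCsmul hCpointed (his.sub hif) hmemae hizero
  have heq : (Prod.fst : E × E → E) =ᵐ[r] Prod.snd :=
    hkey.mono fun z hz => (sub_eq_zero.mp hz).symm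
  rw [← hrfst, ← hrsnd, Measure.map_congr heq]
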